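/- arXiv:1910.13516 — 5 statements merged into one kernel-verified Lean document; each statement's English description precedes it below -/
import Mathlib

section
/- Let F : ℝ^d → ℝ be differentiable with L-Lipschitz continuous gradient (L ≥ 0), let ν > 0, let x ∈ ℝ^d, and let H be a d×d real matrix with operator norm ‖H‖. Then (H ∇^FD F(x))ᵀ (H ∇F(x)) ≥ ‖H ∇F(x)‖² − ‖H ∇F(x)‖ · ‖H‖ · (Lν√d)/2. -/
open MeasureTheory
open scoped RealInnerProductSpace

noncomputable def fdGrad {d : ℕ} (ν : ℝ) (g : EuclideanSpace ℝ (Fin d) → ℝ)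
    (x : EuclideanSpace ℝ (Fin d)) : EuclideanSpace ℝ (Fin d) :=
  (WithLp.equiv 2 (Fin d → ℝ)).symm
    fun j => (g (x + ν • EuclideanSpace.single j (1:ℝ)) - g x) / ν


noncomputable def mApp {d : ℕ} (H : Matrix (Fin d) (Fin d) ℝ) :
    EuclideanSpace ℝ (Fin d) →L[ℝ] EuclideanSpace ℝ (Fin d) :=
  Matrix.toEuclideanCLM (𝕜 := ℝ) H


lemma taylor_bound {d : ℕ} {L : ℝ} (hL : 0 ≤ L)
    (F : EuclideanSpace ℝ (Fin d) → ℝ) (hF : Differentiable ℝ F)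
    (hLip : ∀ x y, ‖gradient F x - gradient F y‖ ≤ L * ‖x - y‖)
    (x v : EuclideanSpace ℝ (Fin d)) :
    |F (x + v) - F x - ⟪gradient F x, v⟫| ≤ L / 2 * ‖v‖ ^ 2 := by
  have hgradcont : Continuous fun y => gradient F y := by
    apply LipschitzWith.continuous (K := L.toNNReal)
    apply LipschitzWith.of_dist_le_mul
    intro a b
    simpa [dist_eq_norm, Real.coe_toNNReal L hL] using hLip a b
  have hderiv : ∀ t : ℝ, HasDerivAt (fun t : ℝ => F (x + t • v))
      ⟪gradient F (x + t • v), v⟫ t := by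
    intro t
    have hc : HasDerivAt (fun t : ℝ => x + t • v) v t := by
      simpa using (hasDerivAt_id t).smul_const v |>.const_add x
    have hg := ((hF (x + t • v)).hasGradientAt.hasFDerivAt).comp_hasDerivAt t hc
    simpa [Function.comp_def] using hg
  have hcont : Continuous fun t : ℝ => ⟪gradient F (x + t • v), v⟫ := by
    exact (hgradcont.comp (by continuity)).inner continuous_const
  have hint : F (x + v) - F x = ∫ t in (0:ℝ)..1, ⟪gradient F (x + t • v), v⟫ := by
    rw [intervalIntegral.integral_eq_sub_of_hasDerivAt
      (fun t _ => hderiv t) (hcont.intervalIntegrable 0 1)]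
    simp
  have hsplit : F (x + v) - F x - ⟪gradient F x, v⟫
      = ∫ t in (0:ℝ)..1, ⟪gradient F (x + t • v) - gradient F x, v⟫ := by
    rw [hint]
    have : ∀ t : ℝ, ⟪gradient F (x + t • v) - gradient F x, v⟫
        = ⟪gradient F (x + t • v), v⟫ - ⟪gradient F x, v⟫ := fun t => inner_sub_left _ _ _
    simp_rw [this]
    rw [intervalIntegral.integral_sub (hcont.intervalIntegrable 0 1)
      (intervalIntegrable_const)]
    simp
  rw [hsplit, ← Real.norm_eq_abs]
  have hb : ∀ t ∈ Set.uIoc (0:ℝ) 1, ‖⟪gradient F (x + t • v) - gradient F x, v⟫‖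
      ≤ L * ‖v‖ ^ 2 * t := by
    intro t ht
    rw [Set.uIoc_of_le (by norm_num : (0:ℝ) ≤ 1)] at ht
    have ht0 : 0 < t := ht.1
    calc ‖⟪gradient F (x + t • v) - gradient F x, v⟫‖
        ≤ ‖gradient F (x + t • v) - gradient F x‖ * ‖v‖ := norm_inner_le_norm _ _
      _ ≤ (L * ‖x + t • v - x‖) * ‖v‖ := by
          gcongr; exact hLip _ _
      _ = L * ‖v‖ ^ 2 * t := by
          simp [norm_smul, abs_of_pos ht0]; ring
  have := intervalIntegral.norm_integral_le_of_norm_le (μ := volume)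
    (g := fun t => L * ‖v‖ ^ 2 * t) (by norm_num : (0:ℝ) ≤ 1)
    (Filter.Eventually.of_forall (fun t ht => hb t (by rwa [Set.uIoc_of_le (by norm_num : (0:ℝ) ≤ 1)])))
    (by apply Continuous.intervalIntegrable; continuity)
  refine this.trans ?_
  rw [intervalIntegral.integral_const_mul, integral_id]
  nlinarith [sq_nonneg ‖v‖]

lemma fd_err {d : ℕ} {L ν : ℝ} (hL : 0 ≤ L) (hν : 0 < ν)
    (F : EuclideanSpace ℝ (Fin d) → ℝ) (hF : Differentiable ℝ F)
    (hLip : ∀ x y, ‖gradient F x - gradient F y‖ ≤ L * ‖x - y‖)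
    (x : EuclideanSpace ℝ (Fin d)) :
    ‖fdGrad ν F x - gradient F x‖ ≤ Real.sqrt d * (L * ν / 2) := by
  have hcomp : ∀ j : Fin d, |(fdGrad ν F x - gradient F x) j| ≤ L * ν / 2 := by
    intro j
    have hv : ‖(ν • EuclideanSpace.single j (1:ℝ) : EuclideanSpace ℝ (Fin d))‖ = ν := by
      rw [norm_smul, EuclideanSpace.norm_single]
      simp [abs_of_pos hν]
    have ht := taylor_bound hL F hF hLip x (ν • EuclideanSpace.single j (1:ℝ))
    rw [hv] at ht
    have hip : ⟪gradient F x, (ν • EuclideanSpace.single j (1:ℝ) : EuclideanSpace ℝ (Fin d))⟫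
        = ν * gradient F x j := by
      rw [real_inner_smul_right, EuclideanSpace.inner_single_right]
      simp
    rw [hip] at ht
    have hj : (fdGrad ν F x - gradient F x) j
        = (F (x + ν • EuclideanSpace.single j (1:ℝ)) - F x - ν * gradient F x j) / ν := by
      simp [fdGrad]
      field_simp
    rw [hj, abs_div, abs_of_pos hν, div_le_iff₀ hν]
    calc |F (x + ν • EuclideanSpace.single j 1) - F x - ν * gradient F x j|
        ≤ L / 2 * ν ^ 2 := ht
      _ = L * ν / 2 * ν := by ring
  rw [EuclideanSpace.norm_eq]
  have : Real.sqrt d * (L * ν / 2) = Real.sqrt (d * (L * ν / 2) ^ 2) := by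
    rw [Real.sqrt_mul (by positivity), Real.sqrt_sq (by positivity)]
  rw [this]
  apply Real.sqrt_le_sqrt
  calc ∑ j, ‖(fdGrad ν F x - gradient F x) j‖ ^ 2
      ≤ ∑ _j : Fin d, (L * ν / 2) ^ 2 := by
        apply Finset.sum_le_sum
        intro j _
        have := hcomp j
        rw [Real.norm_eq_abs]
        nlinarith [abs_nonneg ((fdGrad ν F x - gradient F x) j)]
    _ = d * (L * ν / 2) ^ 2 := by simp [Finset.sum_const]

theorem stmt6 {d : ℕ} (L ν : ℝ) (hL : 0 ≤ L) (hν : 0 < ν)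
    (F : EuclideanSpace ℝ (Fin d) → ℝ) (hF : Differentiable ℝ F)
    (hLip : ∀ x y, ‖gradient F x - gradient F y‖ ≤ L * ‖x - y‖)
    (x : EuclideanSpace ℝ (Fin d)) (H : Matrix (Fin d) (Fin d) ℝ) :
    ⟪mApp H (fdGrad ν F x), mApp H (gradient F x)⟫
      ≥ ‖mApp H (gradient F x)‖ ^ 2
        - ‖mApp H (gradient F x)‖ * ‖mApp H‖ * (L * ν * Real.sqrt d) / 2 := by
  set A := mApp H
  set f := fdGrad ν F x
  set g := gradient F x
  have hsplit : ⟪A f, A g⟫ = ‖A g‖ ^ 2 + ⟪A (f - g), A g⟫ := by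
    rw [map_sub, inner_sub_left, real_inner_self_eq_norm_sq]
    ring
  have h1 : |⟪A (f - g), A g⟫| ≤ ‖A‖ * ‖f - g‖ * ‖A g‖ := by
    calc |⟪A (f - g), A g⟫| ≤ ‖A (f - g)‖ * ‖A g‖ := abs_real_inner_le_norm _ _
      _ ≤ ‖A‖ * ‖f - g‖ * ‖A g‖ := by gcongr; exact A.le_opNorm _
  have h2 : ‖f - g‖ ≤ Real.sqrt d * (L * ν / 2) := fd_err hL hν F hF hLip x
  have h3 : (0:ℝ) ≤ Real.sqrt d := Real.sqrt_nonneg _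
  have h4 : (0:ℝ) ≤ ‖A‖ := norm_nonneg _
  have h5 : (0:ℝ) ≤ ‖A g‖ := norm_nonneg _
  rw [ge_iff_le, hsplit]
  have key : ‖A‖ * ‖f - g‖ * ‖A g‖ ≤ ‖A g‖ * ‖A‖ * (L * ν * Real.sqrt d) / 2 := by
    have h6 := mul_le_mul_of_nonneg_left h2 (mul_nonneg h4 h5)
    nlinarith
  linarith [neg_abs_le ⟪A (f - g), A g⟫, h1, key]
end

section
/- Let F : ℝ^d → ℝ be differentiable with L-Lipschitz continuous gradient (L ≥ 0), let ν > 0, and let x ∈ ℝ^d. Let H be a symmetric positive-definite d×d real matrix with smallest eigenvalue λ_min > 0 and largest eigenvalue λ_max, and suppose ‖∇F(x)‖ > (λ_max · L · ν · √d) / (2 · λ_min). Let G be an integrable random vector in ℝ^d (on some probability space) that is an unbiased estimator of the finite-difference gradient, i.e. E[G] = ∇^FD F(x). Then E[(H G)ᵀ (H ∇F(x))] > 0. -/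
open MeasureTheory
open scoped RealInnerProductSpace

lemma repr_mApp {d : ℕ} (H : Matrix (Fin d) (Fin d) ℝ) (hH : H.IsHermitian)
    (u : EuclideanSpace ℝ (Fin d)) (i : Fin d) :
    hH.eigenvectorBasis.repr (mApp H u) i = hH.eigenvalues i * hH.eigenvectorBasis.repr u i := by
  set b := hH.eigenvectorBasis with hb
  have hAb : ∀ j, mApp H (b j) = hH.eigenvalues j • b j := by
    intro j
    apply (WithLp.equiv 2 (Fin d → ℝ)).injective
    rw [mApp]
    simpa [Matrix.ofLp_toEuclideanCLM] using hH.mulVec_eigenvectorBasis j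
  have h1 : mApp H u = ∑ j, (hH.eigenvalues j * b.repr u j) • b j := by
    conv_lhs => rw [← b.sum_repr u]
    rw [map_sum]
    refine Finset.sum_congr rfl fun j _ => ?_
    rw [_root_.map_smul, hAb j, smul_smul, mul_comm]
  rw [h1, map_sum]
  simp only [_root_.map_smul, OrthonormalBasis.repr_self]
  have hs : (∑ x : Fin d, (hH.eigenvalues x * b.repr u x) • EuclideanSpace.single x (1:ℝ)) i
      = ∑ x : Fin d, ((hH.eigenvalues x * b.repr u x) • EuclideanSpace.single x (1:ℝ)) i :=
    by rw [WithLp.ofLp_sum]; exact Finset.sum_apply i Finset.univ _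
  rw [hs]
  simp [EuclideanSpace.single_apply]

lemma norm_mApp_formula {d : ℕ} (H : Matrix (Fin d) (Fin d) ℝ) (hH : H.IsHermitian)
    (u : EuclideanSpace ℝ (Fin d)) :
    ‖mApp H u‖ = Real.sqrt (∑ i, (hH.eigenvalues i * hH.eigenvectorBasis.repr u i)^2) := by
  rw [← hH.eigenvectorBasis.repr.norm_map (mApp H u), EuclideanSpace.norm_eq]
  congr 1
  refine Finset.sum_congr rfl fun i _ => ?_
  rw [repr_mApp H hH u i, Real.norm_eq_abs, sq_abs]

lemma norm_formula {d : ℕ} (H : Matrix (Fin d) (Fin d) ℝ) (hH : H.IsHermitian)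
    (u : EuclideanSpace ℝ (Fin d)) :
    ‖u‖ = Real.sqrt (∑ i, (hH.eigenvectorBasis.repr u i)^2) := by
  rw [← hH.eigenvectorBasis.repr.norm_map u, EuclideanSpace.norm_eq]
  congr 1
  refine Finset.sum_congr rfl fun i _ => ?_
  rw [Real.norm_eq_abs, sq_abs]

lemma norm_mApp_le {d : ℕ} (H : Matrix (Fin d) (Fin d) ℝ) (hH : H.IsHermitian)
    {lam : ℝ} (hlam0 : 0 ≤ lam) (hlam : ∀ i, |hH.eigenvalues i| ≤ lam)
    (u : EuclideanSpace ℝ (Fin d)) : ‖mApp H u‖ ≤ lam * ‖u‖ := by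
  rw [norm_mApp_formula H hH u, norm_formula H hH u]
  rw [← Real.sqrt_sq hlam0, ← Real.sqrt_mul (sq_nonneg lam), Finset.mul_sum]
  apply Real.sqrt_le_sqrt
  refine Finset.sum_le_sum fun i _ => ?_
  rw [mul_pow]
  have h1 : (hH.eigenvalues i)^2 ≤ lam^2 := by
    rw [← sq_abs]
    exact pow_le_pow_left₀ (abs_nonneg _) (hlam i) 2
  exact mul_le_mul_of_nonneg_right h1 (sq_nonneg _)

lemma le_norm_mApp {d : ℕ} (H : Matrix (Fin d) (Fin d) ℝ) (hH : H.IsHermitian)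
    {m : ℝ} (hm0 : 0 ≤ m) (hm : ∀ i, m ≤ |hH.eigenvalues i|)
    (u : EuclideanSpace ℝ (Fin d)) : m * ‖u‖ ≤ ‖mApp H u‖ := by
  rw [norm_mApp_formula H hH u, norm_formula H hH u]
  rw [← Real.sqrt_sq hm0, ← Real.sqrt_mul (sq_nonneg m), Finset.mul_sum]
  apply Real.sqrt_le_sqrt
  refine Finset.sum_le_sum fun i _ => ?_
  rw [mul_pow]
  have h1 : m^2 ≤ (hH.eigenvalues i)^2 := by
    rw [← sq_abs (hH.eigenvalues i)]
    exact pow_le_pow_left₀ hm0 (hm i) 2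
  exact mul_le_mul_of_nonneg_right h1 (sq_nonneg _)

lemma fderiv_eq_inner_gradient {d : ℕ} (F : EuclideanSpace ℝ (Fin d) → ℝ)
    (y v : EuclideanSpace ℝ (Fin d)) : (fderiv ℝ F y) v = ⟪gradient F y, v⟫ := by
  rw [gradient, ← InnerProductSpace.toDual_apply_apply, LinearIsometryEquiv.apply_symm_apply]

lemma taylor_aux {d : ℕ} (L ν : ℝ) (hν : 0 < ν)
    (F : EuclideanSpace ℝ (Fin d) → ℝ) (hF : Differentiable ℝ F)
    (hLip : ∀ x y, ‖gradient F x - gradient F y‖ ≤ L * ‖x - y‖)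
    (x u : EuclideanSpace ℝ (Fin d)) (hu : ‖u‖ = 1) :
    |F (x + ν • u) - F x - ν * ⟪gradient F x, u⟫| ≤ L * ν ^ 2 / 2 := by
  set f : ℝ → ℝ := fun t => F (x + t • u) - t * ⟪gradient F x, u⟫ - F x with hf
  set f' : ℝ → ℝ := fun t => ⟪gradient F (x + t • u) - gradient F x, u⟫ with hf'
  have hder : ∀ t : ℝ, HasDerivAt f (f' t) t := by
    intro t
    have h0 : HasDerivAt (fun t : ℝ => x + t • u) u t := by
      simpa using ((hasDerivAt_id t).smul_const u).const_add x
    have h1 : HasDerivAt (fun t : ℝ => F (x + t • u)) ((fderiv ℝ F (x + t • u)) u) t :=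
      (hF.differentiableAt.hasFDerivAt.comp_hasDerivAt t h0)
    have h2 : HasDerivAt (fun t : ℝ => t * ⟪gradient F x, u⟫) ⟪gradient F x, u⟫ t := by
      simpa using (hasDerivAt_id t).mul_const ⟪gradient F x, u⟫
    have h3 : HasDerivAt f _ t := (h1.sub h2).sub_const (F x)
    convert h3 using 1
    rw [hf', fderiv_eq_inner_gradient]
    simp [inner_sub_left]
  have bound : ∀ t ∈ Set.Ico (0:ℝ) ν, ‖f' t‖ ≤ L * t := by
    intro t ht
    have h1 : |f' t| ≤ ‖gradient F (x + t • u) - gradient F x‖ * ‖u‖ :=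
      abs_real_inner_le_norm _ _
    have h2 : ‖gradient F (x + t • u) - gradient F x‖ ≤ L * ‖t • u‖ := by
      simpa using hLip (x + t • u) x
    rw [norm_smul, hu, Real.norm_eq_abs, abs_of_nonneg ht.1, mul_one] at h2
    rw [Real.norm_eq_abs]
    calc |f' t| ≤ _ := h1
      _ ≤ L * t := by rw [hu, mul_one]; exact h2
  have hB : ∀ t : ℝ, HasDerivAt (fun t => L * t ^ 2 / 2) (L * t) t := by
    intro t
    have := (((hasDerivAt_pow 2 t).const_mul L).div_const 2)
    exact this.congr_deriv (by ring)
  have key := image_norm_le_of_norm_deriv_right_le_deriv_boundary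
    (f := f) (f' := f') (a := 0) (b := ν)
    (fun t _ => (hder t).continuousAt.continuousWithinAt)
    (fun t _ => (hder t).hasDerivWithinAt)
    (B := fun t => L * t ^ 2 / 2) (B' := fun t => L * t)
    (by simp [hf]) hB bound (Set.right_mem_Icc.2 hν.le)
  have hfν : f ν = F (x + ν • u) - F x - ν * ⟪gradient F x, u⟫ := by rw [hf]; ring
  rw [hfν] at key
  exact key

theorem stmt8 {d : ℕ} {Ω : Type*} [MeasurableSpace Ω] (μ : Measure Ω) [IsProbabilityMeasure μ]
    (L ν : ℝ) (hL : 0 ≤ L) (hν : 0 < ν)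
    (F : EuclideanSpace ℝ (Fin d) → ℝ) (hF : Differentiable ℝ F)
    (hLip : ∀ x y, ‖gradient F x - gradient F y‖ ≤ L * ‖x - y‖)
    (x : EuclideanSpace ℝ (Fin d))
    (H : Matrix (Fin d) (Fin d) ℝ) (hH : H.IsHermitian) (hPD : H.PosDef)
    (lamMin lamMax : ℝ) (hlamMin : 0 < lamMin)
    (hMin : IsLeast (Set.range hH.eigenvalues) lamMin)
    (hMax : IsGreatest (Set.range hH.eigenvalues) lamMax)
    (hgrad : ‖gradient F x‖ > lamMax * L * ν * Real.sqrt d / (2 * lamMin))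
    (G : Ω → EuclideanSpace ℝ (Fin d)) (hG : Integrable G μ)
    (hunbiased : ∫ ω, G ω ∂μ = fdGrad ν F x) :
    0 < ∫ ω, ⟪mApp H (G ω), mApp H (gradient F x)⟫ ∂μ := by
  set g := gradient F x with hg
  set e : EuclideanSpace ℝ (Fin d) := fdGrad ν F x - g with he
  -- eigenvalue facts
  have hlamMax : lamMin ≤ lamMax := hMax.2 hMin.1
  have hlamMax0 : 0 < lamMax := lt_of_lt_of_le hlamMin hlamMax
  have heigMin : ∀ i, lamMin ≤ hH.eigenvalues i := fun i => hMin.2 (Set.mem_range_self i)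
  have heigMax : ∀ i, hH.eigenvalues i ≤ lamMax := fun i => hMax.2 (Set.mem_range_self i)
  have heigAbsMax : ∀ i, |hH.eigenvalues i| ≤ lamMax := fun i =>
    abs_le.2 ⟨by nlinarith [heigMin i], heigMax i⟩
  have heigAbsMin : ∀ i, lamMin ≤ |hH.eigenvalues i| := fun i =>
    le_trans (heigMin i) (le_abs_self _)
  -- Step 1: the integral
  set A := mApp H with hA
  have hint : ∫ ω, ⟪A (G ω), A g⟫ ∂μ = ⟪A (fdGrad ν F x), A g⟫ := by
    set φ : EuclideanSpace ℝ (Fin d) →L[ℝ] ℝ := (innerSL ℝ (A g)).comp A with hφ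
    have h1 : ∀ v, ⟪A v, A g⟫ = φ v := by
      intro v; rw [hφ]
      simp only [ContinuousLinearMap.comp_apply, innerSL_apply_apply]
      exact real_inner_comm _ _
    calc ∫ ω, ⟪A (G ω), A g⟫ ∂μ = ∫ ω, φ (G ω) ∂μ := by simp_rw [h1]
      _ = φ (∫ ω, G ω ∂μ) := ContinuousLinearMap.integral_comp_comm φ hG
      _ = ⟪A (fdGrad ν F x), A g⟫ := by rw [hunbiased, ← h1]
  rw [hint]
  -- Step 2: error bound
  have hcomp : ∀ j : Fin d, |e j| ≤ L * ν / 2 := by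
    intro j
    have hu : ‖EuclideanSpace.single j (1:ℝ)‖ = 1 := by
      simp [EuclideanSpace.norm_single]
    have ht := taylor_aux L ν hν F hF hLip x (EuclideanSpace.single j (1:ℝ)) hu
    have hgj : g j = ⟪g, EuclideanSpace.single j (1:ℝ)⟫ := by
      rw [EuclideanSpace.inner_single_right]; simp
    have hej : e j = (F (x + ν • EuclideanSpace.single j (1:ℝ)) - F x
        - ν * ⟪g, EuclideanSpace.single j (1:ℝ)⟫) / ν := by
      rw [he]
      have : (fdGrad ν F x - g) j = fdGrad ν F x j - g j := rfl
      rw [this, hgj]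
      simp only [fdGrad, WithLp.equiv_symm_apply, WithLp.ofLp_toLp]
      field_simp
    rw [hej, abs_div, abs_of_pos hν]
    rw [div_le_iff₀ hν]
    calc |F (x + ν • EuclideanSpace.single j (1:ℝ)) - F x
        - ν * ⟪g, EuclideanSpace.single j (1:ℝ)⟫| ≤ L * ν ^ 2 / 2 := ht
      _ = L * ν / 2 * ν := by ring
  have henorm : ‖e‖ ≤ L * ν * Real.sqrt d / 2 := by
    rw [EuclideanSpace.norm_eq]
    have h1 : ∑ j : Fin d, ‖e j‖ ^ 2 ≤ ∑ j : Fin d, (L * ν / 2) ^ 2 := by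
      refine Finset.sum_le_sum fun j _ => ?_
      rw [Real.norm_eq_abs]
      exact pow_le_pow_left₀ (abs_nonneg _) (hcomp j) 2
    have h2 : ∑ j : Fin d, (L * ν / 2 : ℝ) ^ 2 = d * (L * ν / 2) ^ 2 := by
      simp [Finset.sum_const, nsmul_eq_mul]
    calc Real.sqrt (∑ j : Fin d, ‖e j‖ ^ 2) ≤ Real.sqrt (d * (L * ν / 2) ^ 2) := by
          apply Real.sqrt_le_sqrt; rw [← h2]; exact h1
      _ = Real.sqrt d * (L * ν / 2) := by
          rw [Real.sqrt_mul (Nat.cast_nonneg d), Real.sqrt_sq (by positivity)]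
      _ = L * ν * Real.sqrt d / 2 := by ring
  -- Step 3: conclude
  have hAg_low : lamMin * ‖g‖ ≤ ‖A g‖ := le_norm_mApp H hH hlamMin.le heigAbsMin g
  have hAe_up : ‖A e‖ ≤ lamMax * ‖e‖ := norm_mApp_le H hH hlamMax0.le heigAbsMax e
  have hmain : lamMax * L * ν * Real.sqrt d / 2 < lamMin * ‖g‖ := by
    rw [gt_iff_lt, div_lt_iff₀ (by positivity)] at hgrad
    nlinarith
  have hAe_lt : ‖A e‖ < ‖A g‖ := by
    calc ‖A e‖ ≤ lamMax * ‖e‖ := hAe_up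
      _ ≤ lamMax * (L * ν * Real.sqrt d / 2) :=
        mul_le_mul_of_nonneg_left henorm hlamMax0.le
      _ = lamMax * L * ν * Real.sqrt d / 2 := by ring
      _ < lamMin * ‖g‖ := hmain
      _ ≤ ‖A g‖ := hAg_low
  have hfd_eq : fdGrad ν F x = g + e := by rw [he]; abel
  rw [hfd_eq, map_add, inner_add_left, real_inner_self_eq_norm_sq]
  have hip : -(‖A e‖ * ‖A g‖) ≤ ⟪A e, A g⟫ :=
    neg_le_of_abs_le (abs_real_inner_le_norm _ _)
  have hAg_pos : 0 < ‖A g‖ := lt_of_le_of_lt (norm_nonneg _) hAe_lt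
  nlinarith [mul_lt_mul_of_pos_right hAe_lt hAg_pos]
end

section
/- Let f : ℝ^d → ℝ be differentiable with L-Lipschitz continuous gradient (L > 0), let f̂ : ℝ^d → ℝ satisfy |f̂(y) − f(y)| ≤ ε_m for all y (ε_m ≥ 0), let ν > 0, and let x ∈ ℝ^d. Then the forward finite-difference gradient estimate computed from the noisy function values satisfies ‖∇^FD f̂(x) − ∇f(x)‖ ≤ (Lν/2)·√d + (2·ε_m/ν)·√d. -/
open MeasureTheory
open scoped RealInnerProductSpace

lemma descent_aux {d : ℕ} (L : ℝ) (hL : 0 ≤ L) (f : EuclideanSpace ℝ (Fin d) → ℝ)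
    (hf : Differentiable ℝ f)
    (hLip : ∀ x y, ‖gradient f x - gradient f y‖ ≤ L * ‖x - y‖)
    (x v : EuclideanSpace ℝ (Fin d)) :
    |f (x + v) - f x - ⟪gradient f x, v⟫| ≤ L / 2 * ‖v‖ ^ 2 := by
  set g' : ℝ → ℝ := fun t => ⟪gradient f (x + t • v), v⟫ with hg'
  have hpath : ∀ t : ℝ, HasDerivAt (fun s : ℝ => x + s • v) v t := fun t => by
    simpa using ((hasDerivAt_id t).smul_const v).const_add x
  have hder : ∀ t : ℝ, HasDerivAt (fun s : ℝ => f (x + s • v)) (g' t) t := fun t => by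
    have h1 := ((hf _).hasGradientAt.hasFDerivAt).comp_hasDerivAt t (hpath t)
    rw [hg']; exact h1
  have hc : Continuous (gradient f) := by
    have : LipschitzWith (Real.toNNReal L) (gradient f) :=
      LipschitzWith.of_dist_le_mul fun a b => by
        simpa [dist_eq_norm, Real.coe_toNNReal L hL] using hLip a b
    exact this.continuous
  have hg'cont : Continuous g' :=
    Continuous.inner (hc.comp (by continuity)) continuous_const
  have key : ∫ t in (0:ℝ)..1, g' t = f (x + v) - f x := by
    have := intervalIntegral.integral_eq_sub_of_hasDerivAt
      (f := fun s : ℝ => f (x + s • v)) (fun t _ => hder t)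
      (hg'cont.intervalIntegrable 0 1)
    simpa using this
  have h0 : ⟪gradient f x, v⟫ = g' 0 := by simp [hg']
  have heq : f (x + v) - f x - ⟪gradient f x, v⟫ = ∫ t in (0:ℝ)..1, (g' t - g' 0) := by
    rw [intervalIntegral.integral_sub (hg'cont.intervalIntegrable _ _)
      intervalIntegrable_const, key, h0]
    simp
  rw [heq]
  have hbd : ∀ᵐ t ∂(volume.restrict (Set.uIoc (0:ℝ) 1)),
      ‖g' t - g' 0‖ ≤ L * ‖v‖ ^ 2 * t := by
    refine (ae_restrict_iff' measurableSet_uIoc).2 (Filter.Eventually.of_forall fun t ht => ?_)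
    rw [Set.uIoc_of_le zero_le_one] at ht
    have ht0 : 0 < t := ht.1
    have : g' t - g' 0 = ⟪gradient f (x + t • v) - gradient f x, v⟫ := by
      simp [hg', inner_sub_left]
    rw [this]
    calc ‖⟪gradient f (x + t • v) - gradient f x, v⟫‖
        ≤ ‖gradient f (x + t • v) - gradient f x‖ * ‖v‖ := by
          simpa using abs_real_inner_le_norm (gradient f (x + t • v) - gradient f x) v
      _ ≤ (L * ‖(x + t • v) - x‖) * ‖v‖ :=
          mul_le_mul_of_nonneg_right (hLip _ _) (norm_nonneg v)
      _ = L * ‖v‖ ^ 2 * t := by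
          rw [add_sub_cancel_left, norm_smul, Real.norm_eq_abs, abs_of_pos ht0]; ring
  calc ‖∫ t in (0:ℝ)..1, (g' t - g' 0)‖
      ≤ |∫ t in (0:ℝ)..1, L * ‖v‖ ^ 2 * t| :=
        (intervalIntegral.norm_integral_le_of_norm_le zero_le_one
          ((ae_restrict_iff' measurableSet_Ioc).1
            (by rw [Set.uIoc_of_le zero_le_one] at hbd; exact hbd))
          (by apply Continuous.intervalIntegrable; continuity)).trans (le_abs_self _)
    _ = L / 2 * ‖v‖ ^ 2 := by
        rw [intervalIntegral.integral_const_mul, integral_id]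
        rw [abs_of_nonneg (by positivity)]
        ring


theorem stmt10 {d : ℕ} (L εm ν : ℝ) (hL : 0 < L) (hε : 0 ≤ εm) (hν : 0 < ν)
    (f : EuclideanSpace ℝ (Fin d) → ℝ) (hf : Differentiable ℝ f)
    (hLip : ∀ x y, ‖gradient f x - gradient f y‖ ≤ L * ‖x - y‖)
    (fh : EuclideanSpace ℝ (Fin d) → ℝ) (hnoise : ∀ y, |fh y - f y| ≤ εm)
    (x : EuclideanSpace ℝ (Fin d)) :
    ‖fdGrad ν fh x - gradient f x‖
      ≤ (L * ν / 2) * Real.sqrt d + (2 * εm / ν) * Real.sqrt d := by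
  set c : ℝ := L * ν / 2 + 2 * εm / ν with hc
  have hc0 : 0 ≤ c := by positivity
  set w : EuclideanSpace ℝ (Fin d) := fdGrad ν fh x - gradient f x with hw
  have hcomp : ∀ j : Fin d, |w j| ≤ c := by
    intro j
    set v : EuclideanSpace ℝ (Fin d) := ν • EuclideanSpace.single j (1:ℝ) with hv
    have hnv : ‖v‖ = ν := by
      simp [hv, norm_smul, abs_of_pos hν]
    have hinner : ⟪gradient f x, v⟫ = ν * (gradient f x) j := by
      rw [hv, real_inner_smul_right]
      norm_num [EuclideanSpace.inner_single_right, -inner_gradient_left]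
    have h3 : |f (x + v) - f x - ν * (gradient f x) j| ≤ L / 2 * ν ^ 2 := by
      have := descent_aux L hL.le f hf hLip x v
      rwa [hinner, hnv] at this
    have h1 := hnoise (x + v)
    have h2 := hnoise x
    have hwj : w j = ((fh (x + v) - f (x + v)) - (fh x - f x)
        + (f (x + v) - f x - ν * (gradient f x) j)) / ν := by
      have : w j = (fh (x + v) - fh x) / ν - (gradient f x) j := by
        simp [hw, fdGrad, hv]
      rw [this]
      field_simp
      ring
    rw [hwj, abs_div, abs_of_pos hν]
    have hnum : |(fh (x + v) - f (x + v)) - (fh x - f x)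
        + (f (x + v) - f x - ν * (gradient f x) j)| ≤ εm + εm + L / 2 * ν ^ 2 := by
      calc _ ≤ |(fh (x + v) - f (x + v)) - (fh x - f x)|
            + |f (x + v) - f x - ν * (gradient f x) j| := abs_add_le _ _
        _ ≤ (|fh (x + v) - f (x + v)| + |fh x - f x|)
            + (L / 2 * ν ^ 2) := add_le_add (abs_sub _ _) h3
        _ ≤ εm + εm + L / 2 * ν ^ 2 := by linarith
    calc _ ≤ (εm + εm + L / 2 * ν ^ 2) / ν := by gcongr
      _ = c := by rw [hc]; field_simp; ring
  have hnorm : ‖w‖ ≤ Real.sqrt d * c := by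
    rw [EuclideanSpace.norm_eq]
    calc Real.sqrt (∑ j, ‖w j‖ ^ 2) ≤ Real.sqrt (∑ _j : Fin d, c ^ 2) := by
          apply Real.sqrt_le_sqrt
          apply Finset.sum_le_sum
          intro j _
          have := hcomp j
          rw [Real.norm_eq_abs]
          nlinarith [abs_nonneg (w j)]
      _ = Real.sqrt d * c := by
          rw [Finset.sum_const, Finset.card_univ, Fintype.card_fin, nsmul_eq_mul,
            Real.sqrt_mul (by positivity), Real.sqrt_sq hc0]
  calc ‖w‖ ≤ Real.sqrt d * c := hnorm
    _ = (L * ν / 2) * Real.sqrt d + (2 * εm / ν) * Real.sqrt d := by rw [hc]; ring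
end

section
/- Let f_1,…,f_n : ℝ^d → ℝ (n ≥ 1) each be differentiable with L-Lipschitz continuous gradient (L ≥ 0), and let F : ℝ^d → ℝ be differentiable. Let ν > 0 and x ∈ ℝ^d. Then the averaged forward finite-difference gradient estimate satisfies ‖(1/n)·Σ_{i=1}^n ∇^FD f_i(x) − ∇F(x)‖ ≤ (Lν√d)/2 + ‖(1/n)·Σ_{i=1}^n ∇f_i(x) − ∇F(x)‖; i.e., the total gradient-estimation error is bounded by the finite-difference discretization error plus the stochastic sampling error. -/
open MeasureTheory
open scoped RealInnerProductSpace

lemma descent_lemma {E : Type*} [NormedAddCommGroup E] [InnerProductSpace ℝ E]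
    [CompleteSpace E]
    (g : E → ℝ) (L : ℝ) (hL : 0 ≤ L) (hdiff : Differentiable ℝ g)
    (hLip : ∀ x y, ‖gradient g x - gradient g y‖ ≤ L * ‖x - y‖)
    (x v : E) :
    |g (x + v) - g x - ⟪gradient g x, v⟫| ≤ L / 2 * ‖v‖ ^ 2 := by
  have hψ : ∀ t : ℝ, HasDerivAt (fun t : ℝ => g (x + t • v))
      ⟪gradient g (x + t • v), v⟫ t := by
    intro t
    have hc : HasDerivAt (fun t : ℝ => x + t • v) v t := by
      simpa using ((hasDerivAt_id t).smul_const v).const_add x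
    have := ((hdiff (x + t • v)).hasGradientAt.hasFDerivAt).comp_hasDerivAt t hc
    rw [InnerProductSpace.toDual_apply_apply] at this
    exact this
  have hgradcont : Continuous (gradient g) := by
    have : LipschitzWith L.toNNReal (gradient g) := by
      apply LipschitzWith.of_dist_le_mul
      intro a b
      rw [dist_eq_norm, dist_eq_norm, Real.coe_toNNReal L hL]
      exact hLip a b
    exact this.continuous
  have hcont : Continuous (fun t : ℝ => ⟪gradient g (x + t • v), v⟫) := by
    exact (hgradcont.comp (by continuity)).inner continuous_const
  have hint : (∫ t in (0:ℝ)..1, ⟪gradient g (x + t • v), v⟫) = g (x + v) - g x := by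
    rw [intervalIntegral.integral_eq_sub_of_hasDerivAt (fun t _ => hψ t)
      (hcont.intervalIntegrable 0 1)]
    simp
  have hconst : (∫ _ in (0:ℝ)..1, ⟪gradient g x, v⟫) = ⟪gradient g x, v⟫ := by
    simp
  have key : g (x + v) - g x - ⟪gradient g x, v⟫
      = ∫ t in (0:ℝ)..1, (⟪gradient g (x + t • v), v⟫ - ⟪gradient g x, v⟫) := by
    rw [intervalIntegral.integral_sub (hcont.intervalIntegrable 0 1)
      (intervalIntegrable_const), hint, hconst]
  rw [key]
  have hbound : ∀ t ∈ Set.Icc (0:ℝ) 1,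
      ‖⟪gradient g (x + t • v), v⟫ - ⟪gradient g x, v⟫‖ ≤ (L * ‖v‖ ^ 2) * t := by
    intro t ht
    have := inner_sub_left (𝕜 := ℝ) (gradient g (x + t • v)) (gradient g x) v
    rw [Real.norm_eq_abs, ← this]
    calc |⟪gradient g (x + t • v) - gradient g x, v⟫|
        ≤ ‖gradient g (x + t • v) - gradient g x‖ * ‖v‖ := abs_real_inner_le_norm _ _
      _ ≤ (L * ‖x + t • v - x‖) * ‖v‖ := by
          have := hLip (x + t • v) x
          exact mul_le_mul_of_nonneg_right this (norm_nonneg v)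
      _ = (L * ‖v‖ ^ 2) * t := by
          rw [show x + t • v - x = t • v by abel, norm_smul, Real.norm_eq_abs,
            abs_of_nonneg ht.1]
          ring
  calc |∫ t in (0:ℝ)..1, (⟪gradient g (x + t • v), v⟫ - ⟪gradient g x, v⟫)|
      ≤ |∫ t in (0:ℝ)..1, (L * ‖v‖ ^ 2) * t| := by
        rw [← Real.norm_eq_abs]
        refine le_trans ?_ (le_abs_self _)
        apply intervalIntegral.norm_integral_le_of_norm_le (by norm_num)
        · exact Filter.Eventually.of_forall fun t ht => hbound t ⟨le_of_lt ht.1, ht.2⟩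
        · exact (continuous_const.mul continuous_id).intervalIntegrable 0 1
    _ = L / 2 * ‖v‖ ^ 2 := by
        rw [intervalIntegral.integral_const_mul, integral_id]
        rw [abs_of_nonneg (by positivity)]
        ring

lemma fd_close {d : ℕ} (L ν : ℝ) (hL : 0 ≤ L) (hν : 0 < ν)
    (g : EuclideanSpace ℝ (Fin d) → ℝ) (hdiff : Differentiable ℝ g)
    (hLip : ∀ x y, ‖gradient g x - gradient g y‖ ≤ L * ‖x - y‖)
    (x : EuclideanSpace ℝ (Fin d)) :
    ‖fdGrad ν g x - gradient g x‖ ≤ L * ν * Real.sqrt d / 2 := by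
  have hcomp : ∀ j : Fin d, |(fdGrad ν g x - gradient g x) j| ≤ L * ν / 2 := by
    intro j
    have hd := descent_lemma g L hL hdiff hLip x (ν • EuclideanSpace.single j (1:ℝ))
    have hnv : ‖ν • EuclideanSpace.single j (1:ℝ)‖ = ν := by
      rw [norm_smul, EuclideanSpace.norm_single]
      simp [abs_of_pos hν]
    have hin : ⟪gradient g x, ν • EuclideanSpace.single j (1:ℝ)⟫
        = ν * (gradient g x) j := by
      rw [real_inner_smul_right, EuclideanSpace.inner_single_right]
      simp
    rw [hnv, hin] at hd
    have hfd : (fdGrad ν g x - gradient g x) j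
        = (g (x + ν • EuclideanSpace.single j (1:ℝ)) - g x - ν * (gradient g x) j) / ν := by
      have : (fdGrad ν g x) j
          = (g (x + ν • EuclideanSpace.single j (1:ℝ)) - g x) / ν := rfl
      simp only [PiLp.sub_apply, this]
      field_simp
    rw [hfd, abs_div, abs_of_pos hν, div_le_iff₀ hν]
    calc |g (x + ν • EuclideanSpace.single j (1:ℝ)) - g x - ν * (gradient g x) j|
        ≤ L / 2 * ν ^ 2 := hd
      _ = L * ν / 2 * ν := by ring
  rw [EuclideanSpace.norm_eq]
  have hsum : (∑ j, ‖(fdGrad ν g x - gradient g x) j‖ ^ 2)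
      ≤ ∑ _j : Fin d, (L * ν / 2) ^ 2 := by
    apply Finset.sum_le_sum
    intro j _
    have h := hcomp j
    rw [Real.norm_eq_abs]
    have : 0 ≤ |(fdGrad ν g x - gradient g x) j| := abs_nonneg _
    nlinarith
  calc Real.sqrt (∑ j, ‖(fdGrad ν g x - gradient g x) j‖ ^ 2)
      ≤ Real.sqrt (∑ _j : Fin d, (L * ν / 2) ^ 2) := Real.sqrt_le_sqrt hsum
    _ = L * ν * Real.sqrt d / 2 := by
        rw [Finset.sum_const, Finset.card_univ, Fintype.card_fin, nsmul_eq_mul]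
        rw [Real.sqrt_mul (by positivity), Real.sqrt_sq (by positivity)]
        ring

theorem stmt14 {d n : ℕ} (hn : 1 ≤ n) (L ν : ℝ) (hL : 0 ≤ L) (hν : 0 < ν)
    (f : Fin n → EuclideanSpace ℝ (Fin d) → ℝ)
    (hdiff : ∀ i, Differentiable ℝ (f i))
    (hLip : ∀ i x y, ‖gradient (f i) x - gradient (f i) y‖ ≤ L * ‖x - y‖)
    (F : EuclideanSpace ℝ (Fin d) → ℝ) (hF : Differentiable ℝ F)
    (x : EuclideanSpace ℝ (Fin d)) :
    ‖(1 / (n : ℝ)) • ∑ i, fdGrad ν (f i) x - gradient F x‖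
      ≤ L * ν * Real.sqrt d / 2
        + ‖(1 / (n : ℝ)) • ∑ i, gradient (f i) x - gradient F x‖ := by
  have hn' : (0:ℝ) < n := by exact_mod_cast hn
  have h1 : ‖(1 / (n : ℝ)) • ∑ i, fdGrad ν (f i) x
      - (1 / (n : ℝ)) • ∑ i, gradient (f i) x‖ ≤ L * ν * Real.sqrt d / 2 := by
    rw [← smul_sub, ← Finset.sum_sub_distrib, norm_smul]
    have hb : ‖∑ i, (fdGrad ν (f i) x - gradient (f i) x)‖
        ≤ ∑ _i : Fin n, L * ν * Real.sqrt d / 2 := by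
      refine le_trans (norm_sum_le _ _) (Finset.sum_le_sum fun i _ => ?_)
      exact fd_close L ν hL hν (f i) (hdiff i) (hLip i) x
    rw [Finset.sum_const, Finset.card_univ, Fintype.card_fin, nsmul_eq_mul] at hb
    calc ‖(1 / (n:ℝ))‖ * ‖∑ i, (fdGrad ν (f i) x - gradient (f i) x)‖
        ≤ ‖(1 / (n:ℝ))‖ * (n * (L * ν * Real.sqrt d / 2)) := by
          exact mul_le_mul_of_nonneg_left hb (norm_nonneg _)
      _ = L * ν * Real.sqrt d / 2 := by
          rw [Real.norm_eq_abs, abs_of_pos (by positivity)]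
          field_simp
  calc ‖(1 / (n : ℝ)) • ∑ i, fdGrad ν (f i) x - gradient F x‖
      ≤ ‖(1 / (n : ℝ)) • ∑ i, fdGrad ν (f i) x - (1 / (n : ℝ)) • ∑ i, gradient (f i) x‖
        + ‖(1 / (n : ℝ)) • ∑ i, gradient (f i) x - gradient F x‖ := by
          have := norm_sub_le_norm_sub_add_norm_sub
            ((1 / (n : ℝ)) • ∑ i, fdGrad ν (f i) x)
            ((1 / (n : ℝ)) • ∑ i, gradient (f i) x) (gradient F x)
          exact this
    _ ≤ L * ν * Real.sqrt d / 2 + ‖(1 / (n : ℝ)) • ∑ i, gradient (f i) x - gradient F x‖ :=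
        by linarith [h1]
end

section
/- Let f : ℝ^d → ℝ be differentiable with L-Lipschitz continuous gradient (L > 0), let f̂ : ℝ^d → ℝ satisfy |f̂(y) − f(y)| ≤ ε_m for all y (ε_m > 0), and let x ∈ ℝ^d. With the choice ν* = 2·√(ε_m/L) of the finite-difference parameter, the forward finite-difference gradient estimate computed from the noisy function values satisfies ‖∇^FD_{ν*} f̂(x) − ∇f(x)‖ ≤ 2·√(L·ε_m)·√d. -/
open MeasureTheory
open scoped RealInnerProductSpace

section aux

variable {F : Type*} [NormedAddCommGroup F] [InnerProductSpace ℝ F] [CompleteSpace F]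

lemma fderiv_apply_eq_inner_gradient (f : F → ℝ) (y v : F) :
    fderiv ℝ f y v = ⟪gradient f y, v⟫ := by
  simp [gradient, InnerProductSpace.toDual_apply_apply]

/-- Quadratic Taylor bound for functions with Lipschitz gradient. -/
lemma taylor_bound_of_lip_gradient {L : ℝ} (hL : 0 ≤ L) (f : F → ℝ)
    (hf : Differentiable ℝ f)
    (hLip : ∀ x y, ‖gradient f x - gradient f y‖ ≤ L * ‖x - y‖)
    (x v : F) :
    |f (x + v) - f x - ⟪gradient f x, v⟫| ≤ L / 2 * ‖v‖ ^ 2 := by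
  set g : ℝ → ℝ := fun t => f (x + t • v) - t * ⟪gradient f x, v⟫ - f x with hg
  have hderiv : ∀ t : ℝ, HasDerivAt g
      (⟪gradient f (x + t • v) - gradient f x, v⟫) t := by
    intro t
    have h1 : HasDerivAt (fun t : ℝ => x + t • v) v t := by
      simpa using ((hasDerivAt_id t).smul_const v).const_add x
    have h2 : HasDerivAt (fun t : ℝ => f (x + t • v))
        (fderiv ℝ f (x + t • v) v) t :=
      (hf (x + t • v)).hasFDerivAt.comp_hasDerivAt t h1
    have h3 : HasDerivAt g
        (fderiv ℝ f (x + t • v) v - ⟪gradient f x, v⟫) t := by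
      simpa [hg] using ((h2.sub ((hasDerivAt_id t).mul_const _)).sub_const (f x))
    rw [fderiv_apply_eq_inner_gradient] at h3
    simpa [inner_sub_left] using h3
  have hB : ∀ t : ℝ, HasDerivAt (fun s : ℝ => L * ‖v‖ ^ 2 / 2 * s ^ 2)
      (L * ‖v‖ ^ 2 * t) t := by
    intro t
    have h := (hasDerivAt_pow 2 t).const_mul (L * ‖v‖ ^ 2 / 2)
    refine h.congr_deriv ?_
    push_cast
    ring
  have hbound : ∀ t ∈ Set.Ico (0:ℝ) 1,
      ‖⟪gradient f (x + t • v) - gradient f x, v⟫‖ ≤ L * ‖v‖ ^ 2 * t := by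
    intro t ht
    calc ‖⟪gradient f (x + t • v) - gradient f x, v⟫‖
        ≤ ‖gradient f (x + t • v) - gradient f x‖ * ‖v‖ := by
          simpa using abs_real_inner_le_norm (gradient f (x + t • v) - gradient f x) v
      _ ≤ (L * ‖x + t • v - x‖) * ‖v‖ := by
          gcongr; exact hLip _ _
      _ = L * ‖v‖ ^ 2 * |t| := by
          simp [norm_smul]; ring
      _ = L * ‖v‖ ^ 2 * t := by rw [abs_of_nonneg ht.1]
  have key := image_norm_le_of_norm_deriv_right_le_deriv_boundary
    (f := g) (a := 0) (b := 1)
    (fun t _ => (hderiv t).continuousAt.continuousWithinAt)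
    (fun t _ => (hderiv t).hasDerivWithinAt)
    (by simp [hg]) hB hbound
  have h1 := key (Set.right_mem_Icc.2 zero_le_one)
  have hg1 : f (x + v) - f x - ⟪gradient f x, v⟫ = g 1 := by
    simp only [hg, one_smul, one_mul]
    ring
  rw [hg1, ← Real.norm_eq_abs]
  exact h1.trans (le_of_eq (by ring))
end aux

theorem stmt16 {d : ℕ} (L εm : ℝ) (hL : 0 < L) (hε : 0 < εm)
    (f : EuclideanSpace ℝ (Fin d) → ℝ) (hf : Differentiable ℝ f)
    (hLip : ∀ x y, ‖gradient f x - gradient f y‖ ≤ L * ‖x - y‖)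
    (fh : EuclideanSpace ℝ (Fin d) → ℝ) (hnoise : ∀ y, |fh y - f y| ≤ εm)
    (x : EuclideanSpace ℝ (Fin d)) :
    ‖fdGrad (2 * Real.sqrt (εm / L)) fh x - gradient f x‖
      ≤ 2 * Real.sqrt (L * εm) * Real.sqrt d := by
  set ν : ℝ := 2 * Real.sqrt (εm / L) with hν
  have hsq : Real.sqrt (εm / L) ^ 2 = εm / L := Real.sq_sqrt (le_of_lt (by positivity))
  have hνpos : 0 < ν := by positivity
  set c : ℝ := 2 * Real.sqrt (L * εm) with hc
  have hcpos : 0 < c := by positivity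
  -- componentwise bound
  have hcomp : ∀ j : Fin d,
      |fdGrad ν fh x j - gradient f x j| ≤ c := by
    intro j
    set e : EuclideanSpace ℝ (Fin d) := EuclideanSpace.single j (1:ℝ) with he
    have hne : ‖e‖ = 1 := by simp [he]
    have hinner : ⟪gradient f x, ν • e⟫ = ν * gradient f x j := by
      rw [inner_smul_right, he, real_inner_comm]
      simp [EuclideanSpace.inner_single_left]
      left; rw [fderiv_apply_eq_inner_gradient, EuclideanSpace.inner_single_right]; simp
    have htay := taylor_bound_of_lip_gradient hL.le f hf hLip x (ν • e)
    rw [hinner] at htay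
    have hnv : ‖ν • e‖ ^ 2 = ν ^ 2 := by
      rw [norm_smul, hne, Real.norm_eq_abs, abs_of_pos hνpos]; ring
    rw [hnv] at htay
    have hval : fdGrad ν fh x j - gradient f x j
        = ((fh (x + ν • e) - f (x + ν • e)) - (fh x - f x)
            + (f (x + ν • e) - f x - ν * gradient f x j)) / ν := by
      field_simp [fdGrad, he]
      rw [show (fdGrad ν fh x).ofLp j = (fh (x + ν • e) - fh x) / ν from rfl]
      field_simp
      ring
    have h1 := hnoise (x + ν • e)
    have h2 := hnoise x
    have hbound : |fdGrad ν fh x j - gradient f x j|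
        ≤ (εm + εm + L / 2 * ν ^ 2) / ν := by
      rw [hval, abs_div, abs_of_pos hνpos]
      gcongr
      calc |fh (x + ν • e) - f (x + ν • e) - (fh x - f x)
              + (f (x + ν • e) - f x - ν * gradient f x j)|
          ≤ |fh (x + ν • e) - f (x + ν • e)| + |fh x - f x|
              + |f (x + ν • e) - f x - ν * gradient f x j| := by
            exact (abs_add_le _ _).trans (by gcongr; exact abs_sub _ _)
        _ ≤ εm + εm + L / 2 * ν ^ 2 := by gcongr
    refine hbound.trans (le_of_eq ?_)
    have hν2 : ν ^ 2 = 4 * (εm / L) := by rw [hν]; rw [mul_pow, hsq]; ring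
    have hsqrt : Real.sqrt (εm / L) = Real.sqrt εm / Real.sqrt L := Real.sqrt_div' _ hL.le ▸ by
      rw [Real.sqrt_div hε.le]
    have hsqrt2 : Real.sqrt (L * εm) = Real.sqrt L * Real.sqrt εm := Real.sqrt_mul hL.le _
    have hsL : Real.sqrt L > 0 := Real.sqrt_pos.2 hL
    have hsε : Real.sqrt εm > 0 := Real.sqrt_pos.2 hε
    have hLεm : Real.sqrt L * Real.sqrt L = L := Real.mul_self_sqrt hL.le
    have hεεm : Real.sqrt εm * Real.sqrt εm = εm := Real.mul_self_sqrt hε.le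
    rw [hν2, hν, hc, hsqrt, hsqrt2]
    field_simp
    linear_combination (-8 : ℝ) * Real.sq_sqrt hε.le
  -- norm bound
  have hnorm : ‖fdGrad ν fh x - gradient f x‖ ≤ c * Real.sqrt d := by
    rw [EuclideanSpace.norm_eq]
    calc Real.sqrt (∑ j, ‖(fdGrad ν fh x - gradient f x) j‖ ^ 2)
        ≤ Real.sqrt (∑ _j : Fin d, c ^ 2) := by
          apply Real.sqrt_le_sqrt
          apply Finset.sum_le_sum
          intro j _
          have := hcomp j
          have hj : (fdGrad ν fh x - gradient f x) j
              = fdGrad ν fh x j - gradient f x j := rfl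
          rw [hj, Real.norm_eq_abs]
          nlinarith [abs_nonneg (fdGrad ν fh x j - gradient f x j)]
      _ = c * Real.sqrt d := by
          rw [Finset.sum_const, Finset.card_univ, Fintype.card_fin, nsmul_eq_mul,
            Real.sqrt_mul (by positivity), Real.sqrt_sq hcpos.le]
          ring
  exact hnorm
end
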